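/- Let n = p_1^{e_1} p_2^{e_2} ⋯ p_k^{e_k} where p_1 < p_2 < ⋯ < p_k are odd primes, e_i ≥ 1, and let m be a positive integer such that p_i = m·t_i + 1 for each i, where the integers t_1,…,t_k have greatest common divisor 1 (so that m is the maximal halidon index of ZMod(n)). Then the number of primitive m-th roots of unity in ZMod(n) is φ(m)^k, where φ is Euler's totient function. -/

import Mathlib

def IsPrimitiveHalidonRoot {R : Type*} [CommRing R] (m : ℕ) (ω : R) : Prop :=
  ω ^ m = 1 ∧ (∀ k : ℕ, 0 < k → k < m → ω ^ k ≠ 1) ∧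
    ∀ k : ℕ, 0 < k → k < m → ∑ r ∈ Finset.range m, ω ^ (r * k) = 0

section Helpers

variable {p e m : ℕ}

/-- Units of `ZMod (p^e)` that reduce to `1` mod `p` have order dividing `p^(e-1)`. -/
lemma orderOf_dvd_of_unitsMap_eq_one (hp : p.Prime) (he : 1 ≤ e)
    (u : (ZMod (p ^ e))ˣ) (hu : ZMod.unitsMap (dvd_pow_self p (by omega : e ≠ 0)) u = 1) :
    orderOf u ∣ p ^ (e - 1) := by
  haveI : Fact p.Prime := ⟨hp⟩
  haveI : NeZero (p ^ e) := ⟨pow_ne_zero e hp.pos.ne'⟩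
  set f := ZMod.unitsMap (dvd_pow_self p (by omega : e ≠ 0)) with hf
  have hmem : u ∈ f.ker := hu
  have hcardker : Nat.card f.ker = p ^ (e - 1) := by
    have hsurj : Function.Surjective f := ZMod.unitsMap_surjective _
    have h1 : Nat.card (ZMod (p ^ e))ˣ =
        Nat.card ((ZMod (p ^ e))ˣ ⧸ f.ker) * Nat.card f.ker :=
      Subgroup.card_eq_card_quotient_mul_card_subgroup f.ker
    have h2 : Nat.card ((ZMod (p ^ e))ˣ ⧸ f.ker) = Nat.card (ZMod p)ˣ := by
      rw [Nat.card_congr (QuotientGroup.quotientKerEquivRange f).toEquiv]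
      rw [MonoidHom.range_eq_top.mpr hsurj]
      exact Nat.card_congr Subgroup.topEquiv.toEquiv
    have h3 : Nat.card (ZMod (p ^ e))ˣ = p ^ (e - 1) * (p - 1) := by
      rw [Nat.card_eq_fintype_card, ZMod.card_units_eq_totient,
        Nat.totient_prime_pow hp (by omega)]
    have h4 : Nat.card (ZMod p)ˣ = p - 1 := by
      haveI : NeZero p := ⟨hp.pos.ne'⟩
      rw [Nat.card_eq_fintype_card, ZMod.card_units_eq_totient, Nat.totient_prime hp]
    rw [h3, h2, h4] at h1
    have hp1 : 0 < p - 1 := by have := hp.two_le; omega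
    have h5 : (p - 1) * p ^ (e - 1) = (p - 1) * Nat.card f.ker := by
      rw [mul_comm (p - 1)]; exact h1
    exact (Nat.eq_of_mul_eq_mul_left hp1 h5).symm
  have : orderOf (⟨u, hmem⟩ : f.ker) = orderOf u := Subgroup.orderOf_mk u hmem
  rw [← this, ← hcardker]
  exact orderOf_dvd_natCard _

end Helpers
section Helpers2

variable {p e m : ℕ}

lemma card_units_orderOf_eq (hp : p.Prime) (he : 1 ≤ e) (hm : 0 < m) (hdvd : m ∣ p - 1) :
    Nat.card {u : (ZMod (p ^ e))ˣ // orderOf u = m} = m.totient := by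
  haveI : Fact p.Prime := ⟨hp⟩
  haveI : NeZero (p ^ e) := ⟨pow_ne_zero e hp.pos.ne'⟩
  haveI : NeZero p := ⟨hp.pos.ne'⟩
  have hp2 := hp.two_le
  have hmlt : m < p := by
    have := Nat.le_of_dvd (by omega) hdvd; omega
  have hpm : ¬ p ∣ m := fun h => by have := Nat.le_of_dvd hm h; omega
  have hcop : Nat.Coprime m (p ^ (e - 1)) :=
    Nat.Coprime.pow_right _ ((hp.coprime_iff_not_dvd.mpr hpm).symm)
  set f := ZMod.unitsMap (dvd_pow_self p (by omega : e ≠ 0)) with hf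
  -- order of image is exactly m for order m elements
  have horder : ∀ u : (ZMod (p ^ e))ˣ, orderOf u = m → orderOf (f u) = m := by
    intro u hu
    have hd : orderOf (f u) ∣ m := hu ▸ orderOf_map_dvd f u
    have hker : f (u ^ orderOf (f u)) = 1 := by rw [map_pow, pow_orderOf_eq_one]
    have h1 : orderOf (u ^ orderOf (f u)) ∣ p ^ (e - 1) :=
      orderOf_dvd_of_unitsMap_eq_one hp he _ hker
    have h2 : orderOf (u ^ orderOf (f u)) ∣ m := hu ▸ orderOf_pow_dvd _
    have h3 : u ^ orderOf (f u) = 1 :=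
      orderOf_eq_one_iff.mp (Nat.dvd_one.mp (hcop ▸ Nat.dvd_gcd h2 h1))
    exact Nat.dvd_antisymm hd (hu ▸ orderOf_dvd_of_pow_eq_one h3)
  -- the bijection
  set F : {u : (ZMod (p ^ e))ˣ // orderOf u = m} → {v : (ZMod p)ˣ // orderOf v = m} :=
    fun u => ⟨f u.1, horder u.1 u.2⟩ with hF
  have hinj : Function.Injective F := by
    rintro ⟨u₁, h₁⟩ ⟨u₂, h₂⟩ h
    have heq : f u₁ = f u₂ := congrArg Subtype.val h
    have hker : f (u₁ * u₂⁻¹) = 1 := by rw [map_mul, map_inv, heq, mul_inv_cancel]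
    have hdvdp : orderOf (u₁ * u₂⁻¹) ∣ p ^ (e - 1) :=
      orderOf_dvd_of_unitsMap_eq_one hp he _ hker
    have e1 : u₁ ^ m = 1 := h₁ ▸ pow_orderOf_eq_one u₁
    have e2 : u₂ ^ m = 1 := h₂ ▸ pow_orderOf_eq_one u₂
    have hpow : (u₁ * u₂⁻¹) ^ m = 1 := by
      rw [mul_pow, inv_pow, e1, e2, inv_one, mul_one]
    have hdvdm : orderOf (u₁ * u₂⁻¹) ∣ m := orderOf_dvd_of_pow_eq_one hpow
    have : u₁ * u₂⁻¹ = 1 :=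
      orderOf_eq_one_iff.mp (Nat.dvd_one.mp (hcop ▸ Nat.dvd_gcd hdvdm hdvdp))
    exact Subtype.ext (by rwa [mul_inv_eq_one] at this)
  have hsurj : Function.Surjective F := by
    rintro ⟨v, hv⟩
    rcases eq_or_lt_of_le (show 1 ≤ m from hm) with hm1 | hm1
    · refine ⟨⟨1, by rw [orderOf_one, ← hm1]⟩, Subtype.ext ?_⟩
      have : v = 1 := orderOf_eq_one_iff.mp (by omega)
      simp [hF, this]
    obtain ⟨w, hw⟩ := ZMod.unitsMap_surjective (dvd_pow_self p (by omega : e ≠ 0)) v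
    have hvm : v ^ m = 1 := by rw [← hv, pow_orderOf_eq_one]
    have hker : f (w ^ m) = 1 := by rw [map_pow, hw, hvm]
    have h1 : (w ^ m) ^ (p ^ (e - 1)) = 1 :=
      orderOf_dvd_iff_pow_eq_one.mp (orderOf_dvd_of_unitsMap_eq_one hp he _ hker)
    obtain ⟨c, -, hc⟩ := Nat.exists_mul_mod_eq_one_of_coprime hcop.symm hm1
    set u := w ^ (p ^ (e - 1) * c) with hu
    have hfu : f u = v := by
      rw [hu, map_pow, hw]
      have : v ^ (p ^ (e - 1) * c) = v ^ 1 := by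
        rw [pow_eq_pow_iff_modEq, hv]
        show p ^ (e - 1) * c % m = 1 % m
        rw [hc, Nat.mod_eq_of_lt hm1]
      rwa [pow_one] at this
    have hum : u ^ m = 1 := by
      have harith : p ^ (e - 1) * c * m = m * p ^ (e - 1) * c := by ring
      rw [hu, ← pow_mul, harith, pow_mul, pow_mul, h1, one_pow]
    have hou : orderOf u = m := by
      have h2 : orderOf u ∣ m := orderOf_dvd_of_pow_eq_one hum
      have h3 : m ∣ orderOf u := by
        have := orderOf_map_dvd f u
        rw [hfu, hv] at this; exact this
      exact Nat.dvd_antisymm h2 h3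
    exact ⟨⟨u, hou⟩, Subtype.ext hfu⟩
  have hcongr : Nat.card {u : (ZMod (p ^ e))ˣ // orderOf u = m}
      = Nat.card {v : (ZMod p)ˣ // orderOf v = m} :=
    Nat.card_congr (Equiv.ofBijective F ⟨hinj, hsurj⟩)
  rw [hcongr, Nat.card_eq_fintype_card, Fintype.card_subtype]
  exact IsCyclic.card_orderOf_eq_totient (by rwa [ZMod.card_units])

end Helpers2
section Helpers3

variable {p e m : ℕ}

lemma isUnit_sub_one_of_pow_eq_one (hp : p.Prime) (he : 1 ≤ e) (hm : 0 < m) (hpm : ¬ p ∣ m)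
    {u : ZMod (p ^ e)} (hu : u ^ m = 1) (hne : u ≠ 1) : IsUnit (u - 1) := by
  haveI : Fact p.Prime := ⟨hp⟩
  haveI : NeZero (p ^ e) := ⟨pow_ne_zero e hp.pos.ne'⟩
  haveI : NeZero p := ⟨hp.pos.ne'⟩
  have hcop : Nat.Coprime m (p ^ (e - 1)) :=
    Nat.Coprime.pow_right _ ((hp.coprime_iff_not_dvd.mpr hpm).symm)
  obtain ⟨U, hU⟩ := IsUnit.of_pow_eq_one hu hm.ne'
  have hUm : U ^ m = 1 := Units.ext (by rw [Units.val_pow_eq_pow_val, hU, hu, Units.val_one])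
  set g := ZMod.castHom (dvd_pow_self p (by omega : e ≠ 0)) (ZMod p) with hg
  -- the reduction of u mod p is not 1
  have hred : g u ≠ 1 := by
    intro h1
    have hker : ZMod.unitsMap (dvd_pow_self p (by omega : e ≠ 0)) U = 1 :=
      Units.ext (by simpa [ZMod.unitsMap_def, hU, hg, ZMod.castHom_apply] using h1)
    have hd1 : orderOf U ∣ p ^ (e - 1) := orderOf_dvd_of_unitsMap_eq_one hp he U hker
    have hd2 : orderOf U ∣ m := orderOf_dvd_of_pow_eq_one hUm
    have : U = 1 := orderOf_eq_one_iff.mp (Nat.dvd_one.mp (hcop ▸ Nat.dvd_gcd hd2 hd1))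
    exact hne (by rw [← hU, this, Units.val_one])
  -- hence u - 1 has value coprime to p
  have hval : ¬ p ∣ (u - 1).val := by
    intro hdvd
    have : ((u - 1).val : ZMod p) = 0 := (ZMod.natCast_eq_zero_iff _ _).mpr hdvd
    rw [ZMod.natCast_val] at this
    have : g (u - 1) = 0 := by rwa [hg, ZMod.castHom_apply]
    rw [map_sub, map_one, sub_eq_zero] at this
    exact hred this
  have hcop2 : Nat.Coprime (u - 1).val (p ^ e) :=
    Nat.Coprime.pow_right _ ((hp.coprime_iff_not_dvd.mpr hval).symm)
  have := (ZMod.isUnit_iff_coprime (u - 1).val (p ^ e)).mpr hcop2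
  rwa [ZMod.natCast_val, ZMod.cast_id] at this

lemma card_ring_orderOf_eq (hp : p.Prime) (he : 1 ≤ e) (hm : 0 < m) (hdvd : m ∣ p - 1) :
    Nat.card {y : ZMod (p ^ e) //
      y ^ m = 1 ∧ ∀ j : ℕ, 0 < j → j < m → y ^ j ≠ 1} = m.totient := by
  haveI : NeZero (p ^ e) := ⟨pow_ne_zero e hp.pos.ne'⟩
  rw [← card_units_orderOf_eq hp he hm hdvd]
  refine Nat.card_congr (Equiv.ofBijective
    (fun u : {u : (ZMod (p ^ e))ˣ // orderOf u = m} =>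
      (⟨(u.1 : ZMod (p ^ e)), ?_, ?_⟩ :
        {y : ZMod (p ^ e) // y ^ m = 1 ∧ ∀ j : ℕ, 0 < j → j < m → y ^ j ≠ 1}))
    ⟨?_, ?_⟩).symm
  · show ((u.1 ^ m : (ZMod (p ^ e))ˣ) : ZMod (p ^ e)) = 1
    have h : u.1 ^ m = 1 := orderOf_dvd_iff_pow_eq_one.mp (dvd_of_eq u.2)
    rw [h, Units.val_one]
  · intro j hj1 hj2 hyp
    have h : u.1 ^ j = 1 := Units.ext (by rw [Units.val_pow_eq_pow_val, hyp, Units.val_one])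
    have h2 : m ∣ j := by rw [← u.2]; exact orderOf_dvd_of_pow_eq_one h
    have := Nat.le_of_dvd hj1 h2
    omega
  · rintro ⟨u₁, h₁⟩ ⟨u₂, h₂⟩ h
    exact Subtype.ext (Units.ext (congrArg Subtype.val h))
  · rintro ⟨y, hy1, hy2⟩
    obtain ⟨U, hU⟩ := IsUnit.of_pow_eq_one hy1 hm.ne'
    have hUm : orderOf U = m := by
      rw [orderOf_eq_iff hm]
      constructor
      · exact Units.ext (by rw [Units.val_pow_eq_pow_val, hU, hy1, Units.val_one])
      · intro j hj1 hj2 hyp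
        exact hy2 j hj2 hj1 (by rw [← hU, ← Units.val_pow_eq_pow_val, hyp, Units.val_one])
    exact ⟨⟨U, hUm⟩, Subtype.ext hU⟩

end Helpers3
/-- Let `n = p₁^{e₁} ⋯ p_k^{e_k}` with `p₁ < ⋯ < p_k` odd primes, `eᵢ ≥ 1`, and let
`m > 0` satisfy `pᵢ = m * tᵢ + 1` where `gcd(t₁, …, t_k) = 1`.  Then the number of
primitive `m`-th roots of unity in `ZMod n` is `φ(m) ^ k`. -/
theorem card_primitive_roots_zmod (k m n : ℕ) (p t e : Fin k → ℕ)
    (hp : ∀ i, (p i).Prime) (hodd : ∀ i, Odd (p i)) (hmono : StrictMono p)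
    (he : ∀ i, 1 ≤ e i) (hpt : ∀ i, p i = m * t i + 1)
    (hgcd : Finset.univ.gcd t = 1) (hm : 0 < m)
    (hn : n = ∏ i, p i ^ e i) :
    Nat.card {ω : ZMod n // IsPrimitiveHalidonRoot m ω} = Nat.totient m ^ k := by
  subst hn
  have hk : 0 < k := by
    rcases Nat.eq_zero_or_pos k with rfl | hk
    · rw [Finset.univ_eq_empty, Finset.gcd_empty] at hgcd
      exact absurd hgcd (by norm_num)
    · exact hk
  have ht : ∀ i, 1 ≤ t i := by
    intro i
    rcases Nat.eq_zero_or_pos (t i) with h0 | h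
    · have h1 := hpt i
      rw [h0, mul_zero] at h1
      have := (hp i).two_le; omega
    · exact h
  have hdvd : ∀ i, m ∣ p i - 1 := fun i => ⟨t i, by have := hpt i; omega⟩
  have hmlt : ∀ i, m < p i := fun i => by
    have h1 := hpt i
    have h2 := ht i
    nlinarith
  have hpm : ∀ i, ¬ p i ∣ m := fun i h => by
    have := Nat.le_of_dvd hm h; have := hmlt i; omega
  have hcop : Pairwise (Function.onFun Nat.Coprime fun i => p i ^ e i) := fun i j hij =>
    Nat.Coprime.pow _ _ ((Nat.coprime_primes (hp i) (hp j)).mpr (hmono.injective.ne hij))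
  haveI : ∀ i, NeZero (p i ^ e i) := fun i => ⟨pow_ne_zero _ (hp i).pos.ne'⟩
  set φ := ZMod.prodEquivPi (fun i => p i ^ e i) hcop with hφ
  have hchar : ∀ ω : ZMod (∏ i, p i ^ e i), IsPrimitiveHalidonRoot m ω ↔
      ∀ i, (φ ω i) ^ m = 1 ∧ ∀ j : ℕ, 0 < j → j < m → (φ ω i) ^ j ≠ 1 := by
    intro ω
    constructor
    · rintro ⟨h1, h2, h3⟩ i
      have hpow : (φ ω i) ^ m = 1 := by
        simpa [map_pow] using congrArg (fun x => φ x i) h1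
      refine ⟨hpow, fun j hj1 hj2 hyp => ?_⟩
      have hs := congrArg (fun x => φ x i) (h3 j hj1 hj2)
      simp only [map_sum, map_pow, map_zero, Finset.sum_apply, Pi.pow_apply,
        Pi.zero_apply] at hs
      have hsum : ∑ r ∈ Finset.range m, (φ ω i) ^ (r * j) = (m : ZMod (p i ^ e i)) := by
        rw [Finset.sum_congr rfl fun r _ => by rw [mul_comm, pow_mul, hyp, one_pow]]
        simp
      rw [hsum] at hs
      have hdd := (ZMod.natCast_eq_zero_iff m (p i ^ e i)).mp hs
      have hle := Nat.le_of_dvd hm hdd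
      have hle2 : p i ≤ p i ^ e i := Nat.le_self_pow (by have := he i; omega) _
      have := hmlt i
      omega
    · intro hQ
      refine ⟨?_, ?_, ?_⟩
      · exact φ.injective (funext fun i => by simpa [map_pow] using (hQ i).1)
      · intro j hj1 hj2 hyp
        exact ((hQ ⟨0, hk⟩).2 j hj1 hj2)
          (by simpa [map_pow] using congrArg (fun x => φ x ⟨0, hk⟩) hyp)
      · intro j hj1 hj2
        apply φ.injective
        refine funext fun i => ?_
        simp only [map_sum, map_pow, map_zero, Finset.sum_apply, Pi.pow_apply,
          Pi.zero_apply]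
        set u := (φ ω i) ^ j with hu
        have hterm : ∀ r ∈ Finset.range m, (φ ω i) ^ (r * j) = u ^ r := fun r _ => by
          rw [hu, ← pow_mul, mul_comm]
        rw [Finset.sum_congr rfl hterm]
        have hum : u ^ m = 1 := by
          rw [hu, ← pow_mul, mul_comm, pow_mul, (hQ i).1, one_pow]
        have hne : u ≠ 1 := (hQ i).2 j hj1 hj2
        have hunit := isUnit_sub_one_of_pow_eq_one (hp i) (he i) hm (hpm i) hum hne
        have hg := geom_sum_mul u m
        rw [hum, sub_self] at hg
        exact (IsUnit.mul_left_eq_zero hunit).mp hg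
  calc Nat.card {ω : ZMod (∏ i, p i ^ e i) // IsPrimitiveHalidonRoot m ω}
      = Nat.card (∀ i, {y : ZMod (p i ^ e i) //
          y ^ m = 1 ∧ ∀ j : ℕ, 0 < j → j < m → y ^ j ≠ 1}) :=
        Nat.card_congr ((Equiv.subtypeEquiv φ.toEquiv hchar).trans
          (Equiv.subtypePiEquivPi))
    _ = ∏ i, Nat.card {y : ZMod (p i ^ e i) //
          y ^ m = 1 ∧ ∀ j : ℕ, 0 < j → j < m → y ^ j ≠ 1} := Nat.card_pi
    _ = ∏ _i : Fin k, m.totient :=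
        Finset.prod_congr rfl fun i _ => card_ring_orderOf_eq (hp i) (he i) hm (hdvd i)
    _ = m.totient ^ k := by simp [Finset.prod_const]
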